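/- Let X be a random vector on the finite hypergrid with pmf p supported on X ⊆ E, and for A ⊆ [d] and z ∈ ∏_{i∈A}{0,...,N_i−2} define φ_A^{(z)}(x) := (∏_{i∈A}(1{x_i = z_i} − 1{x_i = N_i−1})) / p_A(x_A), where p_A is the marginal pmf of X_A. Then the collection { φ_A^{(z)} } over all (A,z) spans the space L² of real-valued functions on the support X. -/

import Mathlib

/-- Product of the single-variable functions `ψ_i^{(z_i)}` over `i ∈ A`. -/
def psiProd {d : ℕ} (N : Fin d → ℕ) (A : Finset (Fin d)) (z : Fin d → ℕ)
    (x : ∀ i, Fin (N i)) : ℝ :=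
  ∏ i ∈ A, ((if (x i : ℕ) = z i then (1 : ℝ) else 0) -
    (if (x i : ℕ) = N i - 1 then 1 else 0))

/-- Marginal pmf of `X_A` evaluated at `x_A`. -/
def marg {d : ℕ} {N : Fin d → ℕ} (p : (∀ i, Fin (N i)) → ℝ) (A : Finset (Fin d))
    (x : ∀ i, Fin (N i)) : ℝ :=
  ∑ y : ∀ i, Fin (N i), if ∀ i ∈ A, y i = x i then p y else 0

/-- The function `φ_A^{(z)}`. -/
noncomputable def phi {d : ℕ} (N : Fin d → ℕ) (p : (∀ i, Fin (N i)) → ℝ) (A : Finset (Fin d))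
    (z : Fin d → ℕ) (x : ∀ i, Fin (N i)) : ℝ :=
  psiProd N A z x / marg p A x

namespace PhiSpan

variable {d : ℕ} {N : Fin d → ℕ}

/-- Sum of `g` over the fiber of points agreeing with `x` on `A`. -/
def fiberSum (g : (∀ i, Fin (N i)) → ℝ) (A : Finset (Fin d)) (x : ∀ i, Fin (N i)) : ℝ :=
  ∑ y : ∀ i, Fin (N i), if ∀ i ∈ A, y i = x i then g y else 0

lemma marg_eq_fiberSum (p : (∀ i, Fin (N i)) → ℝ) (A : Finset (Fin d)) (x) :
    marg p A x = fiberSum p A x := rfl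

def toFin (hN : ∀ i, 1 ≤ N i) (i : Fin d) (n : ℕ) : Fin (N i) :=
  ⟨min n (N i - 1), by have := hN i; omega⟩

def write (hN : ∀ i, 1 ≤ N i) (x : ∀ i, Fin (N i)) (A : Finset (Fin d)) (z : Fin d → ℕ) :
    ∀ i, Fin (N i) := fun i => if i ∈ A then toFin hN i (z i) else x i

def ZA (N : Fin d → ℕ) (A : Finset (Fin d)) : Finset (Fin d → ℕ) :=
  Fintype.piFinset fun i => if i ∈ A then Finset.range (N i - 1) else {0}

lemma write_mem (hN : ∀ i, 1 ≤ N i) (x : ∀ i, Fin (N i)) {A : Finset (Fin d)}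
    {i : Fin d} (hi : i ∈ A) (z : Fin d → ℕ) : write hN x A z i = toFin hN i (z i) :=
  if_pos hi

lemma write_not_mem (hN : ∀ i, 1 ≤ N i) (x : ∀ i, Fin (N i)) {A : Finset (Fin d)}
    {i : Fin d} (hi : i ∉ A) (z : Fin d → ℕ) : write hN x A z i = x i :=
  if_neg hi

lemma fiberSum_congr {g : (∀ i, Fin (N i)) → ℝ} {A : Finset (Fin d)}
    {x x' : ∀ i, Fin (N i)} (h : ∀ i ∈ A, x' i = x i) :
    fiberSum g A x = fiberSum g A x' := by
  refine Finset.sum_congr rfl fun y _ => ?_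
  refine if_congr ?_ rfl rfl
  constructor
  · intro hy i hi; rw [h i hi]; exact hy i hi
  · intro hy i hi; rw [← h i hi]; exact hy i hi

lemma sum_fiberSum_update {g : (∀ i, Fin (N i)) → ℝ} {A : Finset (Fin d)} {i : Fin d}
    (hi : i ∈ A) (x : ∀ i, Fin (N i)) :
    ∑ t : Fin (N i), fiberSum g A (Function.update x i t) = fiberSum g (A.erase i) x := by
  unfold fiberSum
  rw [Finset.sum_comm]
  refine Finset.sum_congr rfl fun y _ => ?_
  have key : ∀ t : Fin (N i),
      (∀ j ∈ A, y j = Function.update x i t j) ↔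
        (y i = t ∧ ∀ j ∈ A.erase i, y j = x j) := by
    intro t
    constructor
    · intro h
      refine ⟨by simpa using h i hi, fun j hj => ?_⟩
      have hj' := Finset.mem_erase.mp hj
      have := h j hj'.2
      rwa [Function.update_of_ne hj'.1] at this
    · rintro ⟨h1, h2⟩ j hj
      by_cases hji : j = i
      · subst hji; simpa using h1
      · rw [Function.update_of_ne hji]
        exact h2 j (Finset.mem_erase.mpr ⟨hji, hj⟩)
  rw [Finset.sum_congr rfl (fun t _ => if_congr (key t) rfl rfl)]
  by_cases hD : ∀ j ∈ A.erase i, y j = x j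
  · rw [if_pos hD, Finset.sum_congr rfl (fun t _ => if_congr (and_iff_left hD) rfl rfl)]
    simp
  · rw [if_neg hD, Finset.sum_congr rfl (fun t _ => if_neg (fun hc => hD hc.2))]
    simp


/-- The constant fiber cardinality. -/
def cA (N : Fin d → ℕ) (A : Finset (Fin d)) : ℕ := ∏ i, if i ∈ A then 1 else N i

lemma filter_fiber_eq (A : Finset (Fin d)) (y : ∀ i, Fin (N i)) :
    Finset.univ.filter (fun x : ∀ i, Fin (N i) => ∀ i ∈ A, y i = x i)
      = Fintype.piFinset (fun i => if i ∈ A then {y i} else Finset.univ) := by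
  ext x
  simp only [Finset.mem_filter, Finset.mem_univ, true_and, Fintype.mem_piFinset]
  constructor
  · intro h i
    by_cases hiA : i ∈ A
    · rw [if_pos hiA, Finset.mem_singleton]; exact (h i hiA).symm
    · rw [if_neg hiA]; exact Finset.mem_univ _
  · intro h i hiA
    have := h i
    rw [if_pos hiA, Finset.mem_singleton] at this
    exact this.symm

lemma pairing (g : (∀ i, Fin (N i)) → ℝ) (A : Finset (Fin d)) (F : (∀ i, Fin (N i)) → ℝ)
    (hF : ∀ x y, (∀ i ∈ A, y i = x i) → F x = F y) :
    ∑ x, F x * fiberSum g A x = (cA N A : ℝ) * ∑ x, F x * g x := by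
  have expand : ∀ y, (∑ x : ∀ i, Fin (N i), if (∀ i ∈ A, y i = x i) then F x else 0)
      = (cA N A : ℝ) * F y := by
    intro y
    rw [← Finset.sum_filter, Finset.sum_congr rfl
      (fun x hx => hF x y (Finset.mem_filter.mp hx).2), Finset.sum_const, filter_fiber_eq,
      Fintype.card_piFinset]
    have hcard : (∏ i, ((if i ∈ A then {y i} else (Finset.univ : Finset (Fin (N i)))).card))
        = cA N A := by
      refine Finset.prod_congr rfl fun i _ => ?_
      by_cases hiA : i ∈ A <;> simp [hiA]
    rw [hcard, nsmul_eq_mul]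
  calc ∑ x, F x * fiberSum g A x
      = ∑ x : ∀ i, Fin (N i), ∑ y : ∀ i, Fin (N i),
          (if (∀ i ∈ A, y i = x i) then F x * g y else 0) := by
        refine Finset.sum_congr rfl fun x _ => ?_
        rw [fiberSum, Finset.mul_sum]
        exact Finset.sum_congr rfl fun y _ => by rw [mul_ite, mul_zero]
    _ = ∑ y : ∀ i, Fin (N i),
          (∑ x : ∀ i, Fin (N i), if (∀ i ∈ A, y i = x i) then F x else 0) * g y := by
        rw [Finset.sum_comm]
        refine Finset.sum_congr rfl fun y _ => ?_
        rw [Finset.sum_mul]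
        exact Finset.sum_congr rfl fun x _ => by rw [ite_mul, zero_mul]
    _ = ∑ y : ∀ i, Fin (N i), (cA N A : ℝ) * (F y * g y) :=
        Finset.sum_congr rfl fun y _ => by rw [expand y]; ring
    _ = (cA N A : ℝ) * ∑ x, F x * g x := by rw [← Finset.mul_sum]

lemma onecoord (hN : ∀ i, 1 ≤ N i) (v : (∀ i, Fin (N i)) → ℝ) (x : ∀ i, Fin (N i)) (i : Fin d)
    (h : ∑ t : Fin (N i), v (Function.update x i t) = 0) :
    v x = ∑ t ∈ Finset.range (N i - 1),
      ((if (x i : ℕ) = t then (1:ℝ) else 0) - (if (x i : ℕ) = N i - 1 then 1 else 0))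
        * v (Function.update x i (toFin hN i t)) := by
  have htofin : ∀ t : Fin (N i), toFin hN i (t : ℕ) = t := by
    intro t
    have := t.isLt
    exact Fin.ext (by simp [toFin]; omega)
  have h' : ∑ t ∈ Finset.range (N i), v (Function.update x i (toFin hN i t)) = 0 := by
    rw [← Fin.sum_univ_eq_sum_range (fun t => v (Function.update x i (toFin hN i t))) (N i)]
    rw [Finset.sum_congr rfl (fun t _ => by rw [htofin t])]
    exact h
  obtain ⟨m, hm⟩ : ∃ m, N i = m + 1 := ⟨N i - 1, by have := hN i; omega⟩
  have hm1 : N i - 1 = m := by omega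
  by_cases hmax : (x i : ℕ) = N i - 1
  · have hstep : ∀ t ∈ Finset.range (N i - 1),
        ((if (x i : ℕ) = t then (1:ℝ) else 0) - (if (x i : ℕ) = N i - 1 then 1 else 0))
          * v (Function.update x i (toFin hN i t))
        = -v (Function.update x i (toFin hN i t)) := by
      intro t ht
      have ht' := Finset.mem_range.mp ht
      rw [if_neg (by omega), if_pos hmax]
      ring
    rw [Finset.sum_congr rfl hstep, Finset.sum_neg_distrib]
    have h2 : ∑ t ∈ Finset.range m, v (Function.update x i (toFin hN i t))
        + v (Function.update x i (toFin hN i m)) = 0 := by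
      rw [← Finset.sum_range_succ, ← hm]; exact h'
    have hxeq : Function.update x i (toFin hN i m) = x := by
      have : toFin hN i m = x i := Fin.ext (by simp [toFin]; omega)
      rw [this, Function.update_eq_self]
    rw [hxeq] at h2
    rw [hm1]
    linarith
  · have hxlt : (x i : ℕ) < N i - 1 := by have := (x i).isLt; omega
    have hstep : ∀ t ∈ Finset.range (N i - 1),
        ((if (x i : ℕ) = t then (1:ℝ) else 0) - (if (x i : ℕ) = N i - 1 then 1 else 0))
          * v (Function.update x i (toFin hN i t))
        = if (x i : ℕ) = t then v (Function.update x i (toFin hN i t)) else 0 := by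
      intro t ht
      rw [if_neg hmax]
      by_cases hxt : (x i : ℕ) = t
      · rw [if_pos hxt, if_pos hxt]; ring
      · rw [if_neg hxt, if_neg hxt]; ring
    rw [Finset.sum_congr rfl hstep, Finset.sum_ite_eq (Finset.range (N i - 1)) ((x i : ℕ))
      (fun t => v (Function.update x i (toFin hN i t))), if_pos (Finset.mem_range.mpr hxlt)]
    have : toFin hN i ((x i : ℕ)) = x i := Fin.ext (by simp [toFin]; omega)
    rw [this, Function.update_eq_self]


lemma sum_piFinset_split (s : Fin d → Finset ℕ) (i : Fin d) (F : (Fin d → ℕ) → ℝ) :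
    ∑ z ∈ Fintype.piFinset s, F z
      = ∑ t ∈ s i, ∑ z ∈ Fintype.piFinset (Function.update s i {0}),
          F (Function.update z i t) := by
  rw [← Finset.sum_product']
  refine Finset.sum_nbij' (fun z => ((z i, Function.update z i 0) : ℕ × (Fin d → ℕ)))
    (fun p => Function.update p.2 i p.1) ?_ ?_ ?_ ?_ ?_
  · intro z hz
    rw [Finset.mem_product]
    constructor
    · exact (Fintype.mem_piFinset.mp hz) i
    · refine Fintype.mem_piFinset.mpr fun j => ?_
      show Function.update z i 0 j ∈ Function.update s i ({0} : Finset ℕ) j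
      by_cases hji : j = i
      · subst hji; simp
      · rw [Function.update_of_ne hji, Function.update_of_ne hji]
        exact (Fintype.mem_piFinset.mp hz) j
  · intro p hp
    rw [Finset.mem_product] at hp
    refine Fintype.mem_piFinset.mpr fun j => ?_
    show Function.update p.2 i p.1 j ∈ s j
    by_cases hji : j = i
    · subst hji; rw [Function.update_self]; exact hp.1
    · rw [Function.update_of_ne hji]
      have := (Fintype.mem_piFinset.mp hp.2) j
      rwa [Function.update_of_ne hji] at this
  · intro z hz
    show Function.update (Function.update z i 0) i (z i) = z
    rw [Function.update_idem, Function.update_eq_self]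
  · intro p hp
    rw [Finset.mem_product] at hp
    have h0 : p.2 i = 0 := by
      have := (Fintype.mem_piFinset.mp hp.2) i
      rwa [Function.update_self, Finset.mem_singleton] at this
    show ((Function.update p.2 i p.1) i, Function.update (Function.update p.2 i p.1) i 0) = p
    rw [Function.update_self, Function.update_idem, ← h0, Function.update_eq_self]
  · intro z hz
    show F z = F (Function.update (Function.update z i 0) i (z i))
    rw [Function.update_idem, Function.update_eq_self]

lemma ZA_empty : ZA N (∅ : Finset (Fin d)) = {fun _ => 0} := by
  ext z
  simp only [ZA, Fintype.mem_piFinset, Finset.notMem_empty, if_false, Finset.mem_singleton]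
  constructor
  · intro h; funext i; simpa using h i
  · intro h i; simp [h]

lemma psiProd_insert {i : Fin d} {A : Finset (Fin d)} (hiA : i ∉ A) (z : Fin d → ℕ) (t : ℕ)
    (x : ∀ i, Fin (N i)) :
    psiProd N (insert i A) (Function.update z i t) x
      = ((if (x i : ℕ) = t then (1:ℝ) else 0) - (if (x i : ℕ) = N i - 1 then 1 else 0))
        * psiProd N A z x := by
  unfold psiProd
  rw [Finset.prod_insert hiA, Function.update_self]
  congr 1
  exact Finset.prod_congr rfl fun j hj => by
    rw [Function.update_of_ne (ne_of_mem_of_not_mem hj hiA)]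

lemma update_write {hN : ∀ i, 1 ≤ N i} {i : Fin d} {A : Finset (Fin d)} (hiA : i ∉ A)
    (x : ∀ i, Fin (N i)) (z : Fin d → ℕ) (t : ℕ) :
    Function.update (write hN x A z) i (toFin hN i t)
      = write hN x (insert i A) (Function.update z i t) := by
  funext j
  by_cases hji : j = i
  · subst hji
    rw [Function.update_self, write_mem hN x (Finset.mem_insert_self j A),
      Function.update_self]
  · rw [Function.update_of_ne hji]
    by_cases hjA : j ∈ A
    · rw [write_mem hN x hjA, write_mem hN x (Finset.mem_insert_of_mem hjA),
        Function.update_of_ne hji]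
    · rw [write_not_mem hN x hjA, write_not_mem hN x (by simp [hji, hjA])]

lemma IE (hN : ∀ i, 1 ≤ N i) (A : Finset (Fin d)) :
    ∀ v : (∀ i, Fin (N i)) → ℝ,
      (∀ i ∈ A, ∀ x, ∑ t : Fin (N i), v (Function.update x i t) = 0) →
      ∀ x, v x = ∑ z ∈ ZA N A, psiProd N A z x * v (write hN x A z) := by
  classical
  induction A using Finset.induction with
  | empty =>
    intro v hv x
    rw [ZA_empty, Finset.sum_singleton]
    have h1 : psiProd N ∅ (fun _ => 0) x = 1 := Finset.prod_empty
    have h2 : write hN x ∅ (fun _ => 0) = x := by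
      funext j; rw [write_not_mem hN x (Finset.notMem_empty j)]
    rw [h1, h2, one_mul]
  | insert _ _ hiA ih =>
    rename_i i A
    intro v hv x
    have hvA : ∀ j ∈ A, ∀ x, ∑ t : Fin (N j), v (Function.update x j t) = 0 :=
      fun j hj => hv j (Finset.mem_insert_of_mem hj)
    rw [ih v hvA x]
    have expand : ∀ z, v (write hN x A z) = ∑ t ∈ Finset.range (N i - 1),
        ((if (x i : ℕ) = t then (1:ℝ) else 0) - (if (x i : ℕ) = N i - 1 then 1 else 0))
          * v (write hN x (insert i A) (Function.update z i t)) := by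
      intro z
      have h1 := onecoord hN v (write hN x A z) i (hv i (Finset.mem_insert_self i A) _)
      rw [write_not_mem hN x hiA] at h1
      rw [h1]
      exact Finset.sum_congr rfl fun t _ => by rw [update_write hiA]
    have hupd : Function.update (fun j => if j ∈ insert i A then Finset.range (N j - 1)
        else ({0} : Finset ℕ)) i ({0} : Finset ℕ)
        = fun j => if j ∈ A then Finset.range (N j - 1) else ({0} : Finset ℕ) := by
      funext j
      by_cases hji : j = i
      · subst hji; rw [Function.update_self, if_neg hiA]
      · rw [Function.update_of_ne hji]
        by_cases hjA : j ∈ A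
        · rw [if_pos hjA, if_pos (Finset.mem_insert_of_mem hjA)]
        · rw [if_neg hjA, if_neg (by simp [hji, hjA])]
    have hsplit := sum_piFinset_split
      (fun j => if j ∈ insert i A then Finset.range (N j - 1) else ({0} : Finset ℕ)) i
      (fun z => psiProd N (insert i A) z x * v (write hN x (insert i A) z))
    have hZA : ZA N (insert i A) = Fintype.piFinset fun j =>
        if j ∈ insert i A then Finset.range (N j - 1) else ({0} : Finset ℕ) := rfl
    rw [hZA, hsplit, if_pos (Finset.mem_insert_self i A), hupd]
    have hpt : ∀ z ∈ ZA N A, psiProd N A z x * v (write hN x A z)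
        = ∑ t ∈ Finset.range (N i - 1),
            psiProd N (insert i A) (Function.update z i t) x
              * v (write hN x (insert i A) (Function.update z i t)) := by
      intro z hz
      rw [expand z, Finset.mul_sum]
      refine Finset.sum_congr rfl fun t ht => ?_
      rw [psiProd_insert hiA]
      ring
    rw [Finset.sum_congr rfl hpt]
    exact Finset.sum_comm


lemma fiberSum_univ (g : (∀ i, Fin (N i)) → ℝ) (x : ∀ i, Fin (N i)) :
    fiberSum g Finset.univ x = g x := by
  unfold fiberSum
  have hiff : ∀ y : ∀ i, Fin (N i), (∀ i ∈ Finset.univ, y i = x i) ↔ y = x := by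
    intro y
    constructor
    · intro h; funext i; exact h i (Finset.mem_univ i)
    · intro h i _; rw [h]
  rw [Finset.sum_congr rfl (fun y _ => if_congr (hiff y) rfl rfl)]
  simp

lemma main (hN : ∀ i, 1 ≤ N i) (p : (∀ i, Fin (N i)) → ℝ) (hp0 : ∀ x, 0 ≤ p x)
    (g : (∀ i, Fin (N i)) → ℝ) (hg0 : ∀ x, p x = 0 → g x = 0)
    (hortho : ∀ (A : Finset (Fin d)) (z : Fin d → ℕ), (∀ i ∈ A, z i < N i - 1) →
      ∑ x, phi N p A z x * g x = 0) :
    ∀ x, g x = 0 := by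
  classical
  have hmnn : ∀ (A : Finset (Fin d)) (x), 0 ≤ fiberSum p A x := by
    intro A x
    refine Finset.sum_nonneg fun y _ => ?_
    by_cases hc : ∀ i ∈ A, y i = x i
    · rw [if_pos hc]; exact hp0 y
    · rw [if_neg hc]
  have hm0 : ∀ (A : Finset (Fin d)) (x), fiberSum p A x = 0 → fiberSum g A x = 0 := by
    intro A x hx
    have h0 : ∀ y ∈ (Finset.univ : Finset (∀ i, Fin (N i))),
        (0:ℝ) ≤ if (∀ i ∈ A, y i = x i) then p y else 0 := by
      intro y _
      by_cases hc : ∀ i ∈ A, y i = x i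
      · rw [if_pos hc]; exact hp0 y
      · rw [if_neg hc]
    have hall := (Finset.sum_eq_zero_iff_of_nonneg h0).mp hx
    refine Finset.sum_eq_zero fun y _ => ?_
    by_cases hc : ∀ i ∈ A, y i = x i
    · rw [if_pos hc]
      apply hg0
      have := hall y (Finset.mem_univ y)
      rwa [if_pos hc] at this
    · rw [if_neg hc]
  set x0 : ∀ i, Fin (N i) := fun i => ⟨0, hN i⟩ with hx0
  have key : ∀ n (A : Finset (Fin d)), A.card < n → ∀ x, fiberSum g A x = 0 := by
    intro n
    induction n with
    | zero => omega
    | succ n ih =>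
      intro A hA
      -- line sums vanish
      have hls : ∀ i ∈ A, ∀ x, ∑ t : Fin (N i), fiberSum g A (Function.update x i t) = 0 := by
        intro i hi x
        rw [sum_fiberSum_update hi]
        exact ih (A.erase i) (by
          have := Finset.card_erase_lt_of_mem hi
          omega) x
      -- key orthogonality
      have horth2 : ∑ x, fiberSum g A x * (g x / fiberSum p A x) = 0 := by
        have h1 : ∀ z ∈ ZA N A, ∑ x, psiProd N A z x / fiberSum p A x * g x = 0 := by
          intro z hz
          have hzlt : ∀ i ∈ A, z i < N i - 1 := by
            intro i hi
            have := (Fintype.mem_piFinset.mp hz) i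
            rw [if_pos hi] at this
            exact Finset.mem_range.mp this
          exact hortho A z hzlt
        calc ∑ x, fiberSum g A x * (g x / fiberSum p A x)
            = ∑ x, ∑ z ∈ ZA N A, (psiProd N A z x * fiberSum g A (write hN x0 A z))
                * (g x / fiberSum p A x) := by
              refine Finset.sum_congr rfl fun x _ => ?_
              rw [← Finset.sum_mul]
              congr 1
              have hIE := IE hN A (fiberSum g A) hls x
              rw [hIE]
              refine Finset.sum_congr rfl fun z _ => ?_
              congr 1
              refine fiberSum_congr fun i hi => ?_
              rw [write_mem hN x hi, write_mem hN x0 hi]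
          _ = ∑ z ∈ ZA N A, ∑ x, (psiProd N A z x * fiberSum g A (write hN x0 A z))
                * (g x / fiberSum p A x) := Finset.sum_comm
          _ = ∑ z ∈ ZA N A, fiberSum g A (write hN x0 A z)
                * ∑ x, psiProd N A z x / fiberSum p A x * g x := by
              refine Finset.sum_congr rfl fun z _ => ?_
              rw [Finset.mul_sum]
              refine Finset.sum_congr rfl fun x _ => ?_
              ring
          _ = 0 := by
              rw [Finset.sum_congr rfl (fun z hz => by rw [h1 z hz, mul_zero])]
              exact Finset.sum_const_zero
      -- pairing
      have hFmeas : ∀ x y : ∀ i, Fin (N i), (∀ i ∈ A, y i = x i) →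
          fiberSum g A x / fiberSum p A x = fiberSum g A y / fiberSum p A y := by
        intro x y h
        rw [fiberSum_congr h (g := g), fiberSum_congr h (g := p)]
      have hpair : ∑ x, (fiberSum g A x / fiberSum p A x) * fiberSum g A x = 0 := by
        rw [pairing g A (fun x => fiberSum g A x / fiberSum p A x) hFmeas]
        have h2 : ∑ x, fiberSum g A x / fiberSum p A x * g x = 0 := by
          rw [← horth2]
          exact Finset.sum_congr rfl fun x _ => by ring
        rw [h2, mul_zero]
      -- nonnegativity
      have hnn : ∀ x ∈ (Finset.univ : Finset (∀ i, Fin (N i))),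
          (0:ℝ) ≤ (fiberSum g A x / fiberSum p A x) * fiberSum g A x := by
        intro x _
        have : (fiberSum g A x / fiberSum p A x) * fiberSum g A x
            = fiberSum g A x * fiberSum g A x / fiberSum p A x := by ring
        rw [this]
        exact div_nonneg (mul_self_nonneg _) (hmnn A x)
      have hall := (Finset.sum_eq_zero_iff_of_nonneg hnn).mp hpair
      intro x
      have hx := hall x (Finset.mem_univ x)
      by_cases hmx : fiberSum p A x = 0
      · exact hm0 A x hmx
      · rcases mul_eq_zero.mp hx with h | h
        · rcases div_eq_zero_iff.mp h with h' | h'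
          · exact h'
          · exact absurd h' hmx
        · exact h
  intro x
  have := key ((Finset.univ : Finset (Fin d)).card + 1) Finset.univ (Nat.lt_succ_self _) x
  rwa [fiberSum_univ] at this

end PhiSpan

theorem phi_family_spans_L2 (d : ℕ) (hd : 1 ≤ d) (N : Fin d → ℕ) (hN : ∀ i, 1 ≤ N i)
    (p : (∀ i, Fin (N i)) → ℝ) (hp0 : ∀ x, 0 ≤ p x) (hp1 : ∑ x, p x = 1) :
    Submodule.span ℝ
      {f : {x : ∀ i, Fin (N i) // p x ≠ 0} → ℝ | ∃ (A : Finset (Fin d)) (z : Fin d → ℕ),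
        (∀ i ∈ A, z i < N i - 1) ∧ f = fun x => phi N p A z x.1} = ⊤ := by
  classical
  by_contra hne
  obtain ⟨φ, hφ0, hφbot⟩ := Submodule.exists_dual_map_eq_bot_of_lt_top
    (lt_top_iff_ne_top.mpr hne) inferInstance
  have hrep : ∀ f : {x : ∀ i, Fin (N i) // p x ≠ 0} → ℝ,
      φ f = ∑ x : {x : ∀ i, Fin (N i) // p x ≠ 0},
        f x * φ (fun y => if x = y then (1:ℝ) else 0) := by
    intro f
    conv_lhs => rw [pi_eq_sum_univ f]
    rw [map_sum]
    exact Finset.sum_congr rfl fun x _ => by rw [map_smul, smul_eq_mul]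
  set g : (∀ i, Fin (N i)) → ℝ := fun x =>
    if h : p x = 0 then 0
    else φ (fun y : {x : ∀ i, Fin (N i) // p x ≠ 0} => if ⟨x, h⟩ = y then (1:ℝ) else 0)
    with hgdef
  have hg0 : ∀ x, p x = 0 → g x = 0 := fun x hx => by rw [hgdef]; exact dif_pos hx
  have hgval : ∀ x : {x : ∀ i, Fin (N i) // p x ≠ 0},
      g x.1 = φ (fun y => if x = y then (1:ℝ) else 0) := by
    intro x
    rw [hgdef]
    simp only [dif_neg x.2, Subtype.coe_eta]
  have hsum_eq : ∀ F : (∀ i, Fin (N i)) → ℝ, (∀ x, p x = 0 → F x = 0) →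
      ∑ x, F x = ∑ x : {x : ∀ i, Fin (N i) // p x ≠ 0}, F x.1 := by
    intro F hF
    rw [← Finset.sum_filter_of_ne (s := Finset.univ) (p := fun x => p x ≠ 0)
      (fun x _ hne' => by intro hpx; exact hne' (hF x hpx))]
    exact Finset.sum_subtype _ (fun x => by simp) F
  have hortho : ∀ (A : Finset (Fin d)) (z : Fin d → ℕ), (∀ i ∈ A, z i < N i - 1) →
      ∑ x, phi N p A z x * g x = 0 := by
    intro A z hz
    have hmem : (fun x : {x : ∀ i, Fin (N i) // p x ≠ 0} => phi N p A z x.1) ∈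
        Submodule.span ℝ {f : {x : ∀ i, Fin (N i) // p x ≠ 0} → ℝ |
          ∃ (A : Finset (Fin d)) (z : Fin d → ℕ),
            (∀ i ∈ A, z i < N i - 1) ∧ f = fun x => phi N p A z x.1} :=
      Submodule.subset_span ⟨A, z, hz, rfl⟩
    have h0 : φ (fun x : {x : ∀ i, Fin (N i) // p x ≠ 0} => phi N p A z x.1) = 0 := by
      have : φ (fun x : {x : ∀ i, Fin (N i) // p x ≠ 0} => phi N p A z x.1) ∈
          Submodule.map φ _ := Submodule.mem_map_of_mem hmem
      rw [hφbot] at this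
      exact (Submodule.mem_bot ℝ).mp this
    calc ∑ x, phi N p A z x * g x
        = ∑ x : {x : ∀ i, Fin (N i) // p x ≠ 0}, phi N p A z x.1 * g x.1 :=
          hsum_eq _ (fun x hx => by rw [hg0 x hx, mul_zero])
      _ = ∑ x : {x : ∀ i, Fin (N i) // p x ≠ 0},
            phi N p A z x.1 * φ (fun y => if x = y then (1:ℝ) else 0) :=
          Finset.sum_congr rfl fun x _ => by rw [hgval x]
      _ = φ (fun x : {x : ∀ i, Fin (N i) // p x ≠ 0} => phi N p A z x.1) := (hrep _).symm
      _ = 0 := h0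
  have hgzero := PhiSpan.main hN p hp0 g hg0 hortho
  apply hφ0
  apply LinearMap.ext
  intro f
  rw [hrep f]
  simp only [LinearMap.zero_apply]
  refine Finset.sum_eq_zero fun x _ => ?_
  rw [← hgval x, hgzero x.1, mul_zero]
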